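/- arXiv:2506.06835 — 2 statements merged into one kernel-verified Lean document; each statement's English description precedes it below -/
import Mathlib

section
/- Let n ≥ 1 and let a, b, c, d ∈ {1,…,n} be pairwise distinct. Then, as words over 𝒢_n, H_{a,b} H_{a,c} H_{b,d} H_{c,d} H_{b,d} H_{a,c} H_{a,b} ≈ H_{a,c} H_{b,d} H_{a,b} H_{b,d} H_{a,c}. -/
open Matrix

noncomputable section

/-- `Z_a`: identity matrix except entry `(a,a)` is `-1`. -/
def Zmat (n : ℕ) (a : Fin n) : Matrix (Fin n) (Fin n) ℝ :=
  fun i j => if i = j then (if i = a then -1 else 1) else 0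

/-- `X_{b,c}`: the permutation matrix exchanging the `b`-th and `c`-th
standard basis vectors. -/
def Xmat (n : ℕ) (b c : Fin n) : Matrix (Fin n) (Fin n) ℝ :=
  fun i j => if j = Equiv.swap b c i then 1 else 0

/-- `H_{b,c}`: identity except entries `(b,b), (b,c), (c,b)` equal `1/√2`
and entry `(c,c)` equals `-1/√2`. -/
def Hmat (n : ℕ) (b c : Fin n) : Matrix (Fin n) (Fin n) ℝ :=
  fun i j =>
    if i = b ∧ j = b then 1 / Real.sqrt 2
    else if i = b ∧ j = c then 1 / Real.sqrt 2
    else if i = c ∧ j = b then 1 / Real.sqrt 2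
    else if i = c ∧ j = c then -(1 / Real.sqrt 2)
    else if i = j then 1 else 0

/-- Generators of `𝒢_n`. -/
inductive Gen (n : ℕ) : Type
  | Z : Fin n → Gen n
  | X : (b c : Fin n) → b ≠ c → Gen n
  | H : (b c : Fin n) → b ≠ c → Gen n

/-- Semantics of a generator. -/
def gsem {n : ℕ} : Gen n → Matrix (Fin n) (Fin n) ℝ
  | Gen.Z a => Zmat n a
  | Gen.X b c _ => Xmat n b c
  | Gen.H b c _ => Hmat n b c

/-- Semantics of a word (rightmost generator acts first). -/
def wsem {n : ℕ} : List (Gen n) → Matrix (Fin n) (Fin n) ℝ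
  | [] => 1
  | g :: w => gsem g * wsem w

/-- The smallest congruence `≈` on words over `𝒢_n` containing the relations
(a1)-(d4), (e1), (e2) of the paper. -/
inductive WRel (n : ℕ) : List (Gen n) → List (Gen n) → Prop
  | rel_zz (a : Fin n) : WRel n [Gen.Z a, Gen.Z a] []
  | rel_xx (a b : Fin n) (hab : a ≠ b) : WRel n [Gen.X a b hab, Gen.X a b hab] []
  | rel_hh (a b : Fin n) (hab : a ≠ b) : WRel n [Gen.H a b hab, Gen.H a b hab] []
  | rel_zz_comm (a b : Fin n) (hab : a ≠ b) : WRel n [Gen.Z a, Gen.Z b] [Gen.Z b, Gen.Z a]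
  | rel_zx_comm (a b c : Fin n) (hab : a ≠ b) (hac : a ≠ c) (hbc : b ≠ c) :
      WRel n [Gen.Z a, Gen.X b c hbc] [Gen.X b c hbc, Gen.Z a]
  | rel_xx_comm (a b c d : Fin n) (hab : a ≠ b) (hac : a ≠ c) (had : a ≠ d)
      (hbc : b ≠ c) (hbd : b ≠ d) (hcd : c ≠ d) :
      WRel n [Gen.X a b hab, Gen.X c d hcd] [Gen.X c d hcd, Gen.X a b hab]
  | rel_zh_comm (a b c : Fin n) (hab : a ≠ b) (hac : a ≠ c) (hbc : b ≠ c) :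
      WRel n [Gen.Z a, Gen.H b c hbc] [Gen.H b c hbc, Gen.Z a]
  | rel_xh_comm (a b c d : Fin n) (hab : a ≠ b) (hac : a ≠ c) (had : a ≠ d)
      (hbc : b ≠ c) (hbd : b ≠ d) (hcd : c ≠ d) :
      WRel n [Gen.X a b hab, Gen.H c d hcd] [Gen.H c d hcd, Gen.X a b hab]
  | rel_hh_comm (a b c d : Fin n) (hab : a ≠ b) (hac : a ≠ c) (had : a ≠ d)
      (hbc : b ≠ c) (hbd : b ≠ d) (hcd : c ≠ d) :
      WRel n [Gen.H a b hab, Gen.H c d hcd] [Gen.H c d hcd, Gen.H a b hab]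
  | rel_zx (a b : Fin n) (hab : a ≠ b) :
      WRel n [Gen.Z a, Gen.X a b hab] [Gen.X a b hab, Gen.Z b]
  | rel_xc2 (a b c : Fin n) (hab : a ≠ b) (hac : a ≠ c) (hbc : b ≠ c) :
      WRel n [Gen.X b c hbc, Gen.X a b hab] [Gen.X a b hab, Gen.X a c hac]
  | rel_xc3 (a b c : Fin n) (hab : a ≠ b) (hac : a ≠ c) (hbc : b ≠ c) :
      WRel n [Gen.X a c hac, Gen.X b c hbc] [Gen.X b c hbc, Gen.X a b hab]
  | rel_hx4 (a b c : Fin n) (hab : a ≠ b) (hac : a ≠ c) (hbc : b ≠ c) :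
      WRel n [Gen.H b c hbc, Gen.X a b hab] [Gen.X a b hab, Gen.H a c hac]
  | rel_hx5 (a b c : Fin n) (hab : a ≠ b) (hac : a ≠ c) (hbc : b ≠ c) :
      WRel n [Gen.H a c hac, Gen.X b c hbc] [Gen.X b c hbc, Gen.H a b hab]
  | rel_zzh (a b : Fin n) (hab : a ≠ b) :
      WRel n [Gen.Z a, Gen.Z b, Gen.H a b hab] [Gen.H a b hab, Gen.Z a, Gen.Z b]
  | rel_zh (a b : Fin n) (hab : a ≠ b) :
      WRel n [Gen.Z b, Gen.H a b hab] [Gen.H a b hab, Gen.X a b hab]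
  | rel_d3 (a b c d : Fin n) (hab : a ≠ b) (hac : a ≠ c) (had : a ≠ d)
      (hbc : b ≠ c) (hbd : b ≠ d) (hcd : c ≠ d) :
      WRel n
        ([Gen.H c d hcd, Gen.H a c hac, Gen.H b d hbd] ++
         [Gen.H c d hcd, Gen.H a c hac, Gen.H b d hbd] ++
         [Gen.H c d hcd, Gen.H a c hac, Gen.H b d hbd] ++
         [Gen.H c d hcd, Gen.H a c hac, Gen.H b d hbd])
        [Gen.H a b hab, Gen.H c d hcd]
  | rel_d4 (a b c d e f : Fin n) (hab : a ≠ b) (hac : a ≠ c) (had : a ≠ d)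
      (hae : a ≠ e) (haf : a ≠ f) (hbc : b ≠ c) (hbd : b ≠ d) (hbe : b ≠ e)
      (hbf : b ≠ f) (hcd : c ≠ d) (hce : c ≠ e) (hcf : c ≠ f) (hde : d ≠ e)
      (hdf : d ≠ f) (hef : e ≠ f) :
      WRel n
        ([Gen.H a c hac, Gen.H b d hbd, Gen.H a b hab, Gen.H a c hac,
          Gen.H b d hbd, Gen.X c e hce, Gen.X d f hdf] ++
         [Gen.H a c hac, Gen.H b d hbd, Gen.H a b hab, Gen.H a c hac,
          Gen.H b d hbd, Gen.X c e hce, Gen.X d f hdf] ++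
         [Gen.H a c hac, Gen.H b d hbd, Gen.H a b hab, Gen.H a c hac,
          Gen.H b d hbd, Gen.X c e hce, Gen.X d f hdf])
        [Gen.H c e hce, Gen.H d f hdf, Gen.H e f hef, Gen.H c e hce,
         Gen.H d f hdf, Gen.X c e hce, Gen.X d f hdf]
  | rel_x_swap (b c : Fin n) (hbc : b ≠ c) :
      WRel n [Gen.X c b (Ne.symm hbc)] [Gen.X b c hbc]
  | rel_h_swap (b c : Fin n) (hbc : b ≠ c) :
      WRel n [Gen.H c b (Ne.symm hbc)] [Gen.X b c hbc, Gen.H b c hbc, Gen.X b c hbc]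
  | refl (w : List (Gen n)) : WRel n w w
  | symm {u v : List (Gen n)} : WRel n u v → WRel n v u
  | trans {u v w : List (Gen n)} : WRel n u v → WRel n v w → WRel n u w
  | append_left (w : List (Gen n)) {u v : List (Gen n)} :
      WRel n u v → WRel n (w ++ u) (w ++ v)
  | append_right (w : List (Gen n)) {u v : List (Gen n)} :
      WRel n u v → WRel n (u ++ w) (v ++ w)

/-- Membership in the ring `ℤ[√2] ⊆ ℝ`. -/
def inZsqrt2 (x : ℝ) : Prop := ∃ a b : ℤ, x = (a : ℝ) + (b : ℝ) * Real.sqrt 2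

/-- Membership in the ring `ℤ[1/√2] ⊆ ℝ`. -/
def inZinvsqrt2 (x : ℝ) : Prop := ∃ k : ℕ, inZsqrt2 (Real.sqrt 2 ^ k * x)

/-- `u ≡ v (mod 2)`, i.e. `(u - v)/2 ∈ ℤ[√2]`. -/
def cong2 (u v : ℝ) : Prop := inZsqrt2 ((u - v) / 2)

/-- Least denominator exponent of a scalar. -/
def lde (x : ℝ) : ℕ := sInf {k : ℕ | inZsqrt2 (Real.sqrt 2 ^ k * x)}

/-- Least denominator exponent of a vector. -/
def ldeVec {m : ℕ} (v : Fin m → ℝ) : ℕ :=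
  sInf {k : ℕ | ∀ i, inZsqrt2 (Real.sqrt 2 ^ k * v i)}

/-- The largest (1-based) index `j` such that the `j`-th column of `M` differs
from the `j`-th standard basis vector (`0` if `M` is the identity). -/
def levelJ {n : ℕ} (M : Matrix (Fin n) (Fin n) ℝ) : ℕ :=
  sSup {m : ℕ | ∃ i : Fin n, m = (i : ℕ) + 1 ∧
    ∃ r : Fin n, M r i ≠ (if r = i then (1 : ℝ) else 0)}

/-- The `levelJ M`-th column of `M` (junk if `n = 0`). -/
def levelCol {n : ℕ} (M : Matrix (Fin n) (Fin n) ℝ) : Fin n → ℝ :=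
  fun r => if h : levelJ M - 1 < n then M r ⟨levelJ M - 1, h⟩ else 0

/-- The level `(j, k, l)` of a matrix, as an element of `ℕ ×ₗ (ℕ ×ₗ ℕ)`
(lexicographic order). -/
def level {n : ℕ} (M : Matrix (Fin n) (Fin n) ℝ) : ℕ ×ₗ (ℕ ×ₗ ℕ) :=
  if levelJ M = 0 then toLex (0, toLex (0, 0))
  else if ldeVec (levelCol M) = 0 then toLex (levelJ M, toLex (0, 0))
  else
    toLex (levelJ M, toLex (ldeVec (levelCol M),
      Nat.card {i : Fin n //
        cong2 (Real.sqrt 2 ^ ldeVec (levelCol M) * levelCol M i) 1 ∨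
        cong2 (Real.sqrt 2 ^ ldeVec (levelCol M) * levelCol M i) (1 + Real.sqrt 2)}))

/-- The level of the sequence of intermediate states obtained by applying the
generators of a word (rightmost first) to a state `s`: the maximum of the
levels of all intermediate states. -/
def seqLevel {n : ℕ} : List (Gen n) → Matrix (Fin n) (Fin n) ℝ → ℕ ×ₗ (ℕ ×ₗ ℕ)
  | [], s => level s
  | g :: w, s => max (level (gsem g * (wsem w * s))) (seqLevel w s)

/-- The basic generators `𝒢'_n = {X_{1,x} : 2 ≤ x ≤ n} ∪ {Z_1, H_{1,2}}`
(written with 1-based indices). -/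
def Gen.isBasic {n : ℕ} : Gen n → Prop
  | Gen.Z a => (a : ℕ) = 0
  | Gen.X b _ _ => (b : ℕ) = 0
  | Gen.H b c _ => (b : ℕ) = 0 ∧ (c : ℕ) = 1

/-- A generator with ordered indices (`b < c` for `X_{b,c}` and `H_{b,c}`). -/
def Gen.ordered {n : ℕ} : Gen n → Prop
  | Gen.Z _ => True
  | Gen.X b c _ => b < c
  | Gen.H b c _ => b < c


lemma wctx {n : ℕ} (w₁ w₂ : List (Gen n)) {u v : List (Gen n)} (h : WRel n u v) :
    WRel n ((w₁ ++ u) ++ w₂) ((w₁ ++ v) ++ w₂) :=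
  WRel.append_right w₂ (WRel.append_left w₁ h)

theorem prop_h0 (n : ℕ) (hn : 1 ≤ n) (a b c d : Fin n)
    (hab : a ≠ b) (hac : a ≠ c) (had : a ≠ d)
    (hbc : b ≠ c) (hbd : b ≠ d) (hcd : c ≠ d) :
    WRel n
      [Gen.H a b hab, Gen.H a c hac, Gen.H b d hbd, Gen.H c d hcd, Gen.H b d hbd, Gen.H a c hac, Gen.H a b hab]
      [Gen.H a c hac, Gen.H b d hbd, Gen.H a b hab, Gen.H b d hbd, Gen.H a c hac] := by
  have dd : WRel n [Gen.H c d hcd, Gen.H c d hcd] [] := WRel.rel_hh c d hcd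
  have aa : WRel n [Gen.H a b hab, Gen.H a b hab] [] := WRel.rel_hh a b hab
  have bb : WRel n [Gen.H a c hac, Gen.H a c hac] [] := WRel.rel_hh a c hac
  have cc : WRel n [Gen.H b d hbd, Gen.H b d hbd] [] := WRel.rel_hh b d hbd
  have comCB : WRel n [Gen.H b d hbd, Gen.H a c hac] [Gen.H a c hac, Gen.H b d hbd] :=
    WRel.rel_hh_comm b d a c hbd hab.symm hbc had.symm hcd.symm hac
  have comAD : WRel n [Gen.H a b hab, Gen.H c d hcd] [Gen.H c d hcd, Gen.H a b hab] :=
    WRel.rel_hh_comm a b c d hab hac had hbc hbd hcd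
  have d3 := WRel.rel_d3 a b c d hab hac had hbc hbd hcd
  have repA := WRel.trans (wctx [Gen.H a b hab] ([] : List (Gen n)) dd.symm) (wctx ([] : List (Gen n)) [Gen.H c d hcd] d3.symm)
  have k8 := (WRel.trans (WRel.trans (WRel.trans (WRel.trans (wctx [] [Gen.H c d hcd, Gen.H a c hac, Gen.H b d hbd, Gen.H c d hcd, Gen.H a c hac, Gen.H b d hbd, Gen.H c d hcd, Gen.H a c hac, Gen.H b d hbd, Gen.H c d hcd, Gen.H a c hac, Gen.H b d hbd] d3) (wctx [Gen.H a b hab, Gen.H c d hcd] [] d3)) (wctx [Gen.H a b hab] [Gen.H c d hcd] comAD.symm)) (wctx [] [Gen.H c d hcd, Gen.H c d hcd] aa)) (wctx [] [] dd))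
  have hL := (WRel.trans (WRel.trans (WRel.trans (wctx [Gen.H a b hab, Gen.H a c hac, Gen.H b d hbd, Gen.H c d hcd] [Gen.H a b hab] comCB) (wctx [] [Gen.H a c hac, Gen.H b d hbd, Gen.H c d hcd, Gen.H a c hac, Gen.H b d hbd, Gen.H a b hab] repA)) (wctx [Gen.H c d hcd, Gen.H a c hac, Gen.H b d hbd, Gen.H c d hcd, Gen.H a c hac, Gen.H b d hbd, Gen.H c d hcd, Gen.H a c hac, Gen.H b d hbd, Gen.H c d hcd, Gen.H a c hac, Gen.H b d hbd, Gen.H c d hcd, Gen.H a c hac, Gen.H b d hbd, Gen.H c d hcd, Gen.H a c hac, Gen.H b d hbd] [] repA)) (wctx [] [Gen.H c d hcd, Gen.H a c hac, Gen.H b d hbd, Gen.H c d hcd, Gen.H a c hac, Gen.H b d hbd, Gen.H c d hcd] k8))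
  have hR := (WRel.trans (WRel.trans (WRel.trans (WRel.trans (WRel.trans (WRel.trans (WRel.trans (WRel.trans (WRel.trans (WRel.trans (WRel.trans (WRel.trans (WRel.trans (WRel.trans (WRel.trans (WRel.trans (wctx [Gen.H a c hac, Gen.H b d hbd, Gen.H a b hab] [] comCB) (wctx [Gen.H a c hac, Gen.H b d hbd] [Gen.H a c hac, Gen.H b d hbd] repA)) (wctx [] [Gen.H a c hac, Gen.H b d hbd, Gen.H c d hcd, Gen.H a c hac, Gen.H b d hbd, Gen.H c d hcd, Gen.H a c hac, Gen.H b d hbd, Gen.H c d hcd, Gen.H a c hac, Gen.H b d hbd, Gen.H c d hcd, Gen.H a c hac, Gen.H b d hbd, Gen.H c d hcd, Gen.H a c hac, Gen.H b d hbd] dd.symm)) (wctx [Gen.H c d hcd] [Gen.H c d hcd, Gen.H a c hac, Gen.H b d hbd, Gen.H c d hcd, Gen.H a c hac, Gen.H b d hbd] d3)) (wctx [] [Gen.H c d hcd, Gen.H c d hcd, Gen.H a c hac, Gen.H b d hbd, Gen.H c d hcd, Gen.H a c hac, Gen.H b d hbd] comAD.symm)) (wctx [Gen.H a b hab] [Gen.H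 c d hcd, Gen.H a c hac, Gen.H b d hbd, Gen.H c d hcd, Gen.H a c hac, Gen.H b d hbd] dd)) (wctx [] [Gen.H c d hcd, Gen.H a c hac, Gen.H b d hbd, Gen.H c d hcd, Gen.H a c hac, Gen.H b d hbd] repA)) (wctx [Gen.H c d hcd, Gen.H a c hac, Gen.H b d hbd, Gen.H c d hcd, Gen.H a c hac, Gen.H b d hbd, Gen.H c d hcd, Gen.H a c hac, Gen.H b d hbd, Gen.H c d hcd, Gen.H a c hac, Gen.H b d hbd, Gen.H c d hcd, Gen.H c d hcd, Gen.H a c hac, Gen.H b d hbd, Gen.H c d hcd, Gen.H a c hac, Gen.H b d hbd] [] dd.symm)) (wctx [Gen.H c d hcd, Gen.H a c hac, Gen.H b d hbd, Gen.H c d hcd, Gen.H a c hac, Gen.H b d hbd, Gen.H c d hcd, Gen.H a c hac, Gen.H b d hbd, Gen.H c d hcd, Gen.H a c hac, Gen.H b d hbd] [Gen.H a c hac, Gen.H b d hbd, Gen.H c d hcd, Gen.H a c hac, Gen.H b d hbd, Gen.H c d hcd, Gen.H c d hcd] dd)) (wctx [Gen.H c d hcd, Gen.H a c hac, Gen.H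 b d hbd, Gen.H c d hcd, Gen.H a c hac, Gen.H b d hbd, Gen.H c d hcd, Gen.H a c hac, Gen.H b d hbd, Gen.H c d hcd, Gen.H a c hac, Gen.H b d hbd, Gen.H a c hac, Gen.H b d hbd, Gen.H c d hcd, Gen.H a c hac, Gen.H b d hbd] [] dd)) (wctx [Gen.H c d hcd, Gen.H a c hac, Gen.H b d hbd, Gen.H c d hcd, Gen.H a c hac, Gen.H b d hbd, Gen.H c d hcd, Gen.H a c hac, Gen.H b d hbd, Gen.H c d hcd, Gen.H a c hac] [Gen.H b d hbd, Gen.H c d hcd, Gen.H a c hac, Gen.H b d hbd] comCB)) (wctx [Gen.H c d hcd, Gen.H a c hac, Gen.H b d hbd, Gen.H c d hcd, Gen.H a c hac, Gen.H b d hbd, Gen.H c d hcd, Gen.H a c hac, Gen.H b d hbd, Gen.H c d hcd] [Gen.H b d hbd, Gen.H b d hbd, Gen.H c d hcd, Gen.H a c hac, Gen.H b d hbd] bb)) (wctx [Gen.H c d hcd, Gen.H a c hac, Gen.H b d hbd, Gen.H c d hcd, Gen.H a c hac, Gen.H b d hbd, Gen.H c d hcd, Gen.H a c hac, Gen.H b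 d hbd, Gen.H c d hcd] [Gen.H c d hcd, Gen.H a c hac, Gen.H b d hbd] cc)) (wctx [Gen.H c d hcd, Gen.H a c hac, Gen.H b d hbd, Gen.H c d hcd, Gen.H a c hac, Gen.H b d hbd, Gen.H c d hcd, Gen.H a c hac, Gen.H b d hbd] [Gen.H a c hac, Gen.H b d hbd] dd)) (wctx [Gen.H c d hcd, Gen.H a c hac, Gen.H b d hbd, Gen.H c d hcd, Gen.H a c hac, Gen.H b d hbd, Gen.H c d hcd, Gen.H a c hac] [Gen.H b d hbd] comCB)) (wctx [Gen.H c d hcd, Gen.H a c hac, Gen.H b d hbd, Gen.H c d hcd, Gen.H a c hac, Gen.H b d hbd, Gen.H c d hcd] [Gen.H b d hbd, Gen.H b d hbd] bb)) (wctx [Gen.H c d hcd, Gen.H a c hac, Gen.H b d hbd, Gen.H c d hcd, Gen.H a c hac, Gen.H b d hbd, Gen.H c d hcd] [] cc))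
  exact WRel.trans hL hR.symm
end
end

section
/- Let n ≥ 1 and let a, b, c, d, e, f ∈ {1,…,n} be pairwise distinct. Then, as words over 𝒢_n, H_{c,f} H_{d,e} H_{f,e} H_{d,e} H_{c,f} H_{a,c} H_{b,d} H_{a,b} H_{b,d} H_{a,c} H_{a,f} H_{b,e} H_{a,b} H_{b,e} H_{a,f} ≈ H_{a,c} H_{b,d} H_{a,b} H_{b,d} H_{a,c}. -/
open Matrix

noncomputable section

lemma WRel.mid {n : ℕ} (w1 w2 : List (Gen n)) {u v : List (Gen n)} (h : WRel n u v) :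
    WRel n (w1 ++ (u ++ w2)) (w1 ++ (v ++ w2)) :=
  WRel.append_left w1 (WRel.append_right w2 h)

theorem prop_h2 (n : ℕ) (hn : 1 ≤ n) (a b c d e f : Fin n)
    (hab : a ≠ b) (hac : a ≠ c) (had : a ≠ d) (hae : a ≠ e) (haf : a ≠ f)
    (hbc : b ≠ c) (hbd : b ≠ d) (hbe : b ≠ e) (hbf : b ≠ f)
    (hcd : c ≠ d) (hce : c ≠ e) (hcf : c ≠ f)
    (hde : d ≠ e) (hdf : d ≠ f) (hef : e ≠ f) :
    WRel n
      [Gen.H c f hcf, Gen.H d e hde, Gen.H f e (Ne.symm hef), Gen.H d e hde, Gen.H c f hcf, Gen.H a c hac, Gen.H b d hbd, Gen.H a b hab, Gen.H b d hbd, Gen.H a c hac, Gen.H a f haf, Gen.H b e hbe, Gen.H a b hab, Gen.H b e hbe, Gen.H a f haf]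
      [Gen.H a c hac, Gen.H b d hbd, Gen.H a b hab, Gen.H b d hbd, Gen.H a c hac] := by
  have XU : WRel n [Gen.X c f hcf, Gen.X d e hde, Gen.H a c hac, Gen.H b d hbd, Gen.H a b hab, Gen.H a c hac, Gen.H b d hbd] [Gen.H a f haf, Gen.H b e hbe, Gen.H a b hab, Gen.H a f haf, Gen.H b e hbe, Gen.X c f hcf, Gen.X d e hde] :=
    (WRel.trans (WRel.trans (WRel.trans (WRel.trans (WRel.trans (WRel.trans (WRel.trans (WRel.trans (WRel.trans (WRel.mid [Gen.X c f hcf] [Gen.H b d hbd, Gen.H a b hab, Gen.H a c hac, Gen.H b d hbd] (WRel.rel_xh_comm d e a c hde (Ne.symm had) (Ne.symm hcd) (Ne.symm hae) (Ne.symm hce) hac)) (WRel.mid [] [Gen.X d e hde, Gen.H b d hbd, Gen.H a b hab, Gen.H a c hac, Gen.H b d hbd] (WRel.symm (WRel.rel_hx5 a c f hac haf hcf)))) (WRel.mid [Gen.H a f haf, Gen.X c f hcf] [Gen.H a b hab, Gen.H a c hac, Gen.H b d hbd] (WRel.symm (WRel.rel_hx5 b d e hbd hbe hde)))) (WRel.mid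 [Gen.H a f haf] [Gen.X d e hde, Gen.H a b hab, Gen.H a c hac, Gen.H b d hbd] (WRel.rel_xh_comm c f b e hcf (Ne.symm hbc) hce (Ne.symm hbf) (Ne.symm hef) hbe))) (WRel.mid [Gen.H a f haf, Gen.H b e hbe, Gen.X c f hcf] [Gen.H a c hac, Gen.H b d hbd] (WRel.rel_xh_comm d e a b hde (Ne.symm had) (Ne.symm hbd) (Ne.symm hae) (Ne.symm hbe) hab))) (WRel.mid [Gen.H a f haf, Gen.H b e hbe] [Gen.X d e hde, Gen.H a c hac, Gen.H b d hbd] (WRel.rel_xh_comm c f a b hcf (Ne.symm hac) (Ne.symm hbc) (Ne.symm haf) (Ne.symm hbf) hab))) (WRel.mid [Gen.H a f haf, Gen.H b e hbe, Gen.H a b hab, Gen.X c f hcf] [Gen.H b d hbd] (WRel.rel_xh_comm d e a c hde (Ne.symm had) (Ne.symm hcd) (Ne.symm hae) (Ne.symm hce) hac))) (WRel.mid [Gen.H a f haf, Gen.H b e hbe, Gen.H a b hab] [Gen.X d e hde, Gen.H b d hbd] (WRel.symm (WRel.rel_hx5 a c f hac haf hcf)))) (WRel.mid [Gen.H a f haf,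 Gen.H b e hbe, Gen.H a b hab, Gen.H a f haf, Gen.X c f hcf] [] (WRel.symm (WRel.rel_hx5 b d e hbd hbe hde)))) (WRel.mid [Gen.H a f haf, Gen.H b e hbe, Gen.H a b hab, Gen.H a f haf] [Gen.X d e hde] (WRel.rel_xh_comm c f b e hcf (Ne.symm hbc) hce (Ne.symm hbf) (Ne.symm hef) hbe)))
  have XUstep : WRel n [Gen.H a c hac, Gen.H b d hbd, Gen.H a b hab, Gen.H a c hac, Gen.H b d hbd, Gen.X c f hcf, Gen.X d e hde, Gen.H a c hac, Gen.H b d hbd, Gen.H a b hab, Gen.H a c hac, Gen.H b d hbd, Gen.X c f hcf, Gen.X d e hde, Gen.H a c hac, Gen.H b d hbd, Gen.H a b hab, Gen.H a c hac, Gen.H b d hbd] [Gen.H a c hac, Gen.H b d hbd, Gen.H a b hab, Gen.H a c hac, Gen.H b d hbd, Gen.H a f haf, Gen.H b e hbe, Gen.H a b hab, Gen.H a f haf, Gen.H b e hbe, Gen.X c f hcf, Gen.X d e hde, Gen.X c f hcf, Gen.X d e hde, Gen.H a c hac, Gen.H b d hbd, Gen.H a b hab, Gen.H a c hac, Gen.H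 b d hbd] :=
    WRel.mid [Gen.H a c hac, Gen.H b d hbd, Gen.H a b hab, Gen.H a c hac, Gen.H b d hbd] [Gen.X c f hcf, Gen.X d e hde, Gen.H a c hac, Gen.H b d hbd, Gen.H a b hab, Gen.H a c hac, Gen.H b d hbd] XU
  have chainU : WRel n [Gen.H a c hac, Gen.H b d hbd, Gen.H a b hab, Gen.H a c hac, Gen.H b d hbd, Gen.X c f hcf, Gen.X d e hde, Gen.H a c hac, Gen.H b d hbd, Gen.H a b hab, Gen.H a c hac, Gen.H b d hbd, Gen.X c f hcf, Gen.X d e hde, Gen.H a c hac, Gen.H b d hbd, Gen.H a b hab, Gen.H a c hac, Gen.H b d hbd] [Gen.H a c hac, Gen.H b d hbd, Gen.H a b hab, Gen.H b d hbd, Gen.H a c hac, Gen.H a f haf, Gen.H b e hbe, Gen.H a b hab, Gen.H b e hbe, Gen.H a f haf, Gen.H a c hac, Gen.H b d hbd, Gen.H a b hab, Gen.H b d hbd, Gen.H a c hac] :=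
    WRel.trans XUstep (WRel.trans (WRel.trans (WRel.trans (WRel.trans (WRel.trans (WRel.mid [Gen.H a c hac, Gen.H b d hbd, Gen.H a b hab, Gen.H a c hac, Gen.H b d hbd, Gen.H a f haf, Gen.H b e hbe, Gen.H a b hab, Gen.H a f haf, Gen.H b e hbe, Gen.X c f hcf] [Gen.X d e hde, Gen.H a c hac, Gen.H b d hbd, Gen.H a b hab, Gen.H a c hac, Gen.H b d hbd] (WRel.rel_xx_comm d e c f hde (Ne.symm hcd) hdf (Ne.symm hce) hef hcf)) (WRel.mid [Gen.H a c hac, Gen.H b d hbd, Gen.H a b hab, Gen.H a c hac, Gen.H b d hbd, Gen.H a f haf, Gen.H b e hbe, Gen.H a b hab, Gen.H a f haf, Gen.H b e hbe] [Gen.X d e hde, Gen.X d e hde, Gen.H a c hac, Gen.H b d hbd, Gen.H a b hab, Gen.H a c hac, Gen.H b d hbd] (WRel.rel_xx c f hcf))) (WRel.mid [Gen.H a c hac, Gen.H b d hbd, Gen.H a b hab, Gen.H a c hac, Gen.H b d hbd, Gen.H a f haf, Gen.H b e hbe, Gen.H a b hab, Gen.H a f haf, Gen.H b e hbe] [Gen.H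 a c hac, Gen.H b d hbd, Gen.H a b hab, Gen.H a c hac, Gen.H b d hbd] (WRel.rel_xx d e hde))) (WRel.mid [Gen.H a c hac, Gen.H b d hbd, Gen.H a b hab] [Gen.H a f haf, Gen.H b e hbe, Gen.H a b hab, Gen.H a f haf, Gen.H b e hbe, Gen.H a c hac, Gen.H b d hbd, Gen.H a b hab, Gen.H a c hac, Gen.H b d hbd] (WRel.rel_hh_comm a c b d hac hab had (Ne.symm hbc) hcd hbd))) (WRel.mid [Gen.H a c hac, Gen.H b d hbd, Gen.H a b hab, Gen.H b d hbd, Gen.H a c hac, Gen.H a f haf, Gen.H b e hbe, Gen.H a b hab] [Gen.H a c hac, Gen.H b d hbd, Gen.H a b hab, Gen.H a c hac, Gen.H b d hbd] (WRel.rel_hh_comm a f b e haf hab hae (Ne.symm hbf) (Ne.symm hef) hbe))) (WRel.mid [Gen.H a c hac, Gen.H b d hbd, Gen.H a b hab, Gen.H b d hbd, Gen.H a c hac, Gen.H a f haf, Gen.H b e hbe, Gen.H a b hab, Gen.H b e hbe, Gen.H a f haf, Gen.H a c hac, Gen.H b d hbd, Gen.H a b hab] [] (WRel.rel_hh_comm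 a c b d hac hab had (Ne.symm hbc) hcd hbd)))
  have cancelX : WRel n [Gen.H a c hac, Gen.H b d hbd, Gen.H a b hab, Gen.H a c hac, Gen.H b d hbd, Gen.X c f hcf, Gen.X d e hde, Gen.H a c hac, Gen.H b d hbd, Gen.H a b hab, Gen.H a c hac, Gen.H b d hbd, Gen.X c f hcf, Gen.X d e hde, Gen.H a c hac, Gen.H b d hbd, Gen.H a b hab, Gen.H a c hac, Gen.H b d hbd, Gen.X c f hcf, Gen.X d e hde, Gen.X d e hde, Gen.X c f hcf] [Gen.H a c hac, Gen.H b d hbd, Gen.H a b hab, Gen.H a c hac, Gen.H b d hbd, Gen.X c f hcf, Gen.X d e hde, Gen.H a c hac, Gen.H b d hbd, Gen.H a b hab, Gen.H a c hac, Gen.H b d hbd, Gen.X c f hcf, Gen.X d e hde, Gen.H a c hac, Gen.H b d hbd, Gen.H a b hab, Gen.H a c hac, Gen.H b d hbd] :=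
    (WRel.trans (WRel.mid [Gen.H a c hac, Gen.H b d hbd, Gen.H a b hab, Gen.H a c hac, Gen.H b d hbd, Gen.X c f hcf, Gen.X d e hde, Gen.H a c hac, Gen.H b d hbd, Gen.H a b hab, Gen.H a c hac, Gen.H b d hbd, Gen.X c f hcf, Gen.X d e hde, Gen.H a c hac, Gen.H b d hbd, Gen.H a b hab, Gen.H a c hac, Gen.H b d hbd, Gen.X c f hcf] [Gen.X c f hcf] (WRel.rel_xx d e hde)) (WRel.mid [Gen.H a c hac, Gen.H b d hbd, Gen.H a b hab, Gen.H a c hac, Gen.H b d hbd, Gen.X c f hcf, Gen.X d e hde, Gen.H a c hac, Gen.H b d hbd, Gen.H a b hab, Gen.H a c hac, Gen.H b d hbd, Gen.X c f hcf, Gen.X d e hde, Gen.H a c hac, Gen.H b d hbd, Gen.H a b hab, Gen.H a c hac, Gen.H b d hbd] [] (WRel.rel_xx c f hcf)))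
  have r_d4 : WRel n [Gen.H a c hac, Gen.H b d hbd, Gen.H a b hab, Gen.H a c hac, Gen.H b d hbd, Gen.X c f hcf, Gen.X d e hde, Gen.H a c hac, Gen.H b d hbd, Gen.H a b hab, Gen.H a c hac, Gen.H b d hbd, Gen.X c f hcf, Gen.X d e hde, Gen.H a c hac, Gen.H b d hbd, Gen.H a b hab, Gen.H a c hac, Gen.H b d hbd, Gen.X c f hcf, Gen.X d e hde] [Gen.H c f hcf, Gen.H d e hde, Gen.H f e (Ne.symm hef), Gen.H c f hcf, Gen.H d e hde, Gen.X c f hcf, Gen.X d e hde] :=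
    WRel.rel_d4 a b c d f e hab hac had haf hae hbc hbd hbf hbe hcd hcf hce hdf hde (Ne.symm hef)
  have r_d4' : WRel n [Gen.H a c hac, Gen.H b d hbd, Gen.H a b hab, Gen.H a c hac, Gen.H b d hbd, Gen.X c f hcf, Gen.X d e hde, Gen.H a c hac, Gen.H b d hbd, Gen.H a b hab, Gen.H a c hac, Gen.H b d hbd, Gen.X c f hcf, Gen.X d e hde, Gen.H a c hac, Gen.H b d hbd, Gen.H a b hab, Gen.H a c hac, Gen.H b d hbd, Gen.X c f hcf, Gen.X d e hde, Gen.X d e hde, Gen.X c f hcf] [Gen.H c f hcf, Gen.H d e hde, Gen.H f e (Ne.symm hef), Gen.H c f hcf, Gen.H d e hde, Gen.X c f hcf, Gen.X d e hde, Gen.X d e hde, Gen.X c f hcf] :=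
    WRel.append_right [Gen.X d e hde, Gen.X c f hcf] r_d4
  have chainA : WRel n [Gen.H a c hac, Gen.H b d hbd, Gen.H a b hab, Gen.H a c hac, Gen.H b d hbd, Gen.X c f hcf, Gen.X d e hde, Gen.H a c hac, Gen.H b d hbd, Gen.H a b hab, Gen.H a c hac, Gen.H b d hbd, Gen.X c f hcf, Gen.X d e hde, Gen.H a c hac, Gen.H b d hbd, Gen.H a b hab, Gen.H a c hac, Gen.H b d hbd] [Gen.H c f hcf, Gen.H d e hde, Gen.H f e (Ne.symm hef), Gen.H d e hde, Gen.H c f hcf] :=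
    WRel.trans (WRel.symm cancelX) (WRel.trans r_d4' (WRel.trans (WRel.trans (WRel.mid [Gen.H c f hcf, Gen.H d e hde, Gen.H f e (Ne.symm hef), Gen.H c f hcf, Gen.H d e hde, Gen.X c f hcf] [Gen.X c f hcf] (WRel.rel_xx d e hde)) (WRel.mid [Gen.H c f hcf, Gen.H d e hde, Gen.H f e (Ne.symm hef), Gen.H c f hcf, Gen.H d e hde] [] (WRel.rel_xx c f hcf))) (WRel.mid [Gen.H c f hcf, Gen.H d e hde, Gen.H f e (Ne.symm hef)] [] (WRel.rel_hh_comm c f d e hcf hcd hce (Ne.symm hdf) (Ne.symm hef) hde))))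
  have K : WRel n [Gen.H a c hac, Gen.H b d hbd, Gen.H a b hab, Gen.H b d hbd, Gen.H a c hac, Gen.H a f haf, Gen.H b e hbe, Gen.H a b hab, Gen.H b e hbe, Gen.H a f haf, Gen.H a c hac, Gen.H b d hbd, Gen.H a b hab, Gen.H b d hbd, Gen.H a c hac] [Gen.H c f hcf, Gen.H d e hde, Gen.H f e (Ne.symm hef), Gen.H d e hde, Gen.H c f hcf] :=
    WRel.trans (WRel.symm chainU) chainA
  have BB : WRel n [Gen.H a c hac, Gen.H b d hbd, Gen.H a b hab, Gen.H b d hbd, Gen.H a c hac, Gen.H a c hac, Gen.H b d hbd, Gen.H a b hab, Gen.H b d hbd, Gen.H a c hac] [] :=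
    (WRel.trans (WRel.trans (WRel.trans (WRel.trans (WRel.mid [Gen.H a c hac, Gen.H b d hbd, Gen.H a b hab, Gen.H b d hbd] [Gen.H b d hbd, Gen.H a b hab, Gen.H b d hbd, Gen.H a c hac] (WRel.rel_hh a c hac)) (WRel.mid [Gen.H a c hac, Gen.H b d hbd, Gen.H a b hab] [Gen.H a b hab, Gen.H b d hbd, Gen.H a c hac] (WRel.rel_hh b d hbd))) (WRel.mid [Gen.H a c hac, Gen.H b d hbd] [Gen.H b d hbd, Gen.H a c hac] (WRel.rel_hh a b hab))) (WRel.mid [Gen.H a c hac] [Gen.H a c hac] (WRel.rel_hh b d hbd))) (WRel.mid [] [] (WRel.rel_hh a c hac)))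
  have CC : WRel n [Gen.H a f haf, Gen.H b e hbe, Gen.H a b hab, Gen.H b e hbe, Gen.H a f haf, Gen.H a f haf, Gen.H b e hbe, Gen.H a b hab, Gen.H b e hbe, Gen.H a f haf] [] :=
    (WRel.trans (WRel.trans (WRel.trans (WRel.trans (WRel.mid [Gen.H a f haf, Gen.H b e hbe, Gen.H a b hab, Gen.H b e hbe] [Gen.H b e hbe, Gen.H a b hab, Gen.H b e hbe, Gen.H a f haf] (WRel.rel_hh a f haf)) (WRel.mid [Gen.H a f haf, Gen.H b e hbe, Gen.H a b hab] [Gen.H a b hab, Gen.H b e hbe, Gen.H a f haf] (WRel.rel_hh b e hbe))) (WRel.mid [Gen.H a f haf, Gen.H b e hbe] [Gen.H b e hbe, Gen.H a f haf] (WRel.rel_hh a b hab))) (WRel.mid [Gen.H a f haf] [Gen.H a f haf] (WRel.rel_hh b e hbe))) (WRel.mid [] [] (WRel.rel_hh a f haf)))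
  have g1 : WRel n [Gen.H c f hcf, Gen.H d e hde, Gen.H f e (Ne.symm hef), Gen.H d e hde, Gen.H c f hcf, Gen.H a c hac, Gen.H b d hbd, Gen.H a b hab, Gen.H b d hbd, Gen.H a c hac, Gen.H a f haf, Gen.H b e hbe, Gen.H a b hab, Gen.H b e hbe, Gen.H a f haf] [Gen.H a c hac, Gen.H b d hbd, Gen.H a b hab, Gen.H b d hbd, Gen.H a c hac, Gen.H a f haf, Gen.H b e hbe, Gen.H a b hab, Gen.H b e hbe, Gen.H a f haf, Gen.H a c hac, Gen.H b d hbd, Gen.H a b hab, Gen.H b d hbd, Gen.H a c hac, Gen.H a c hac, Gen.H b d hbd, Gen.H a b hab, Gen.H b d hbd, Gen.H a c hac, Gen.H a f haf, Gen.H b e hbe, Gen.H a b hab, Gen.H b e hbe, Gen.H a f haf] :=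
    WRel.mid [] [Gen.H a c hac, Gen.H b d hbd, Gen.H a b hab, Gen.H b d hbd, Gen.H a c hac, Gen.H a f haf, Gen.H b e hbe, Gen.H a b hab, Gen.H b e hbe, Gen.H a f haf] (WRel.symm K)
  have g2 : WRel n [Gen.H a c hac, Gen.H b d hbd, Gen.H a b hab, Gen.H b d hbd, Gen.H a c hac, Gen.H a f haf, Gen.H b e hbe, Gen.H a b hab, Gen.H b e hbe, Gen.H a f haf, Gen.H a c hac, Gen.H b d hbd, Gen.H a b hab, Gen.H b d hbd, Gen.H a c hac, Gen.H a c hac, Gen.H b d hbd, Gen.H a b hab, Gen.H b d hbd, Gen.H a c hac, Gen.H a f haf, Gen.H b e hbe, Gen.H a b hab, Gen.H b e hbe, Gen.H a f haf] [Gen.H a c hac, Gen.H b d hbd, Gen.H a b hab, Gen.H b d hbd, Gen.H a c hac, Gen.H a f haf, Gen.H b e hbe, Gen.H a b hab, Gen.H b e hbe, Gen.H a f haf, Gen.H a f haf, Gen.H b e hbe, Gen.H a b hab, Gen.H b e hbe, Gen.H a f haf] :=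
    WRel.mid [Gen.H a c hac, Gen.H b d hbd, Gen.H a b hab, Gen.H b d hbd, Gen.H a c hac, Gen.H a f haf, Gen.H b e hbe, Gen.H a b hab, Gen.H b e hbe, Gen.H a f haf] [Gen.H a f haf, Gen.H b e hbe, Gen.H a b hab, Gen.H b e hbe, Gen.H a f haf] BB
  have g3 : WRel n [Gen.H a c hac, Gen.H b d hbd, Gen.H a b hab, Gen.H b d hbd, Gen.H a c hac, Gen.H a f haf, Gen.H b e hbe, Gen.H a b hab, Gen.H b e hbe, Gen.H a f haf, Gen.H a f haf, Gen.H b e hbe, Gen.H a b hab, Gen.H b e hbe, Gen.H a f haf] [Gen.H a c hac, Gen.H b d hbd, Gen.H a b hab, Gen.H b d hbd, Gen.H a c hac] :=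
    WRel.mid [Gen.H a c hac, Gen.H b d hbd, Gen.H a b hab, Gen.H b d hbd, Gen.H a c hac] [] CC
  exact WRel.trans g1 (WRel.trans g2 g3)
end
end
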